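/- arXiv:2407.11526 — 8 statements merged into one kernel-verified Lean document; each statement's English description precedes it below -/
import Mathlib

section
/- Let a ∈ ℂ and let (i,j) be one of the index pairs (1,6), (2,5), (3,4). Then the following are equivalent: (1) for every nonzero z = (z₁,…,z₆) ∈ ℂ⁶ satisfying z₁z₆ + z₂z₅ + z₃z₄ = 0, one has ∑_{k=1}^{6} |z_k|² + 2·Re(a·conj(z_i)·z_j) > 0; (2) |a| < 2. -/
private lemma sum_sq_pos' (z : Fin 6 → ℂ) (hz : z ≠ 0) :
    0 < ∑ k, ‖z k‖ ^ 2 := by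
  obtain ⟨k, hk⟩ := Function.ne_iff.mp hz
  have h1 : 0 < ‖z k‖ ^ 2 := pow_pos (norm_pos_iff.mpr hk) 2
  exact h1.trans_le (Finset.single_le_sum (f := fun k => ‖z k‖ ^ 2)
    (fun i _ => by positivity) (Finset.mem_univ k))

private lemma key_pos' (a u v x y p q : ℂ) (ha : ‖a‖ < 2)
    (hq : u * v + x * y + p * q = 0)
    (hS : 0 < ‖u‖ ^ 2 + ‖v‖ ^ 2 + ‖x‖ ^ 2 +
      ‖y‖ ^ 2 + ‖p‖ ^ 2 + ‖q‖ ^ 2) :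
    0 < ‖u‖ ^ 2 + ‖v‖ ^ 2 + ‖x‖ ^ 2 +
      ‖y‖ ^ 2 + ‖p‖ ^ 2 + ‖q‖ ^ 2 +
      2 * (a * (starRingEnd ℂ) u * v).re := by
  have habs : ‖u‖ * ‖v‖ ≤
      ‖x‖ * ‖y‖ + ‖p‖ * ‖q‖ := by
    have h1 : u * v = -(x * y + p * q) := by linear_combination hq
    calc ‖u‖ * ‖v‖ = ‖u * v‖ := (norm_mul _ _).symm
      _ = ‖x * y + p * q‖ := by rw [h1, norm_neg]
      _ ≤ ‖x * y‖ + ‖p * q‖ := norm_add_le _ _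
      _ = ‖x‖ * ‖y‖ + ‖p‖ * ‖q‖ := by
          rw [norm_mul, norm_mul]
  have hre : -(‖a‖ * ‖u‖ * ‖v‖) ≤
      (a * (starRingEnd ℂ) u * v).re := by
    have h1 := (abs_le.1 (Complex.abs_re_le_norm (a * (starRingEnd ℂ) u * v))).1
    rw [norm_mul, norm_mul, Complex.norm_conj] at h1
    linarith
  have h4 : 4 * (‖u‖ * ‖v‖) ≤ ‖u‖ ^ 2 + ‖v‖ ^ 2 +
      ‖x‖ ^ 2 + ‖y‖ ^ 2 + ‖p‖ ^ 2 + ‖q‖ ^ 2 := by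
    nlinarith [sq_nonneg (‖u‖ - ‖v‖),
      sq_nonneg (‖x‖ - ‖y‖), sq_nonneg (‖p‖ - ‖q‖)]
  have h5 := mul_le_mul_of_nonneg_left h4 (norm_nonneg a)
  have h6 := mul_lt_mul_of_pos_right ha hS
  nlinarith [hre, h5, h6]

private lemma exists_w' (a : ℂ) (ha : 2 ≤ ‖a‖) :
    ∃ w : ℂ, ‖w‖ = 1 ∧ (a * w).re = -‖a‖ := by
  have ha0 : a ≠ 0 := by
    intro h0; rw [h0] at ha; simp at ha; linarith
  have habs : (‖a‖ : ℂ) ≠ 0 := by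
    simp [ha0]
  refine ⟨-(starRingEnd ℂ) a / (‖a‖ : ℂ), ?_, ?_⟩
  · simp [map_div₀]
    exact ha0
  · have haw : a * (-(starRingEnd ℂ) a / (‖a‖ : ℂ)) = -(‖a‖ : ℂ) := by
      field_simp
      rw [Complex.mul_conj]
      norm_cast
      rw [← Complex.sq_norm]
    rw [haw]
    simp


/-- The invariant `(2,2)`-form `Ω_a` on `ℂ⁴` is transverse iff `|a| < 2`:
algebraic core. Indices are 0-based, so the pairs `(1,6), (2,5), (3,4)` of the
paper become `(0,5), (1,4), (2,3)`. The quadric `Q` is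
`z₁z₆ + z₂z₅ + z₃z₄ = 0`. -/
theorem transverse_iff_abs_lt_two (a : ℂ) (i j : Fin 6)
    (hij : (i, j) = (0, 5) ∨ (i, j) = (1, 4) ∨ (i, j) = (2, 3)) :
    (∀ z : Fin 6 → ℂ, z ≠ 0 →
        z 0 * z 5 + z 1 * z 4 + z 2 * z 3 = 0 →
        0 < ∑ k, ‖z k‖ ^ 2 + 2 * (a * (starRingEnd ℂ) (z i) * z j).re) ↔
      ‖a‖ < 2 := by
  constructor
  · intro h
    by_contra hc
    push_neg at hc
    obtain ⟨w, hwabs, hre⟩ := exists_w' a hc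
    rcases hij with hh | hh | hh <;>
      (rw [Prod.mk.injEq] at hh; obtain ⟨hi, hj⟩ := hh; subst hi; subst hj)
    · obtain ⟨z, hz⟩ : ∃ z : Fin 6 → ℂ, z = ![1, 1, 0, 0, -w, w] := ⟨_, rfl⟩
      have e0 : z 0 = 1 := by rw [hz]; rfl
      have e1 : z 1 = 1 := by rw [hz]; rfl
      have e2 : z 2 = 0 := by rw [hz]; rfl
      have e3 : z 3 = 0 := by rw [hz]; rfl
      have e4 : z 4 = -w := by rw [hz]; rfl
      have e5 : z 5 = w := by rw [hz]; rfl
      have hp := h z (fun h0 => one_ne_zero (e0 ▸ congrFun h0 0))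
        (by rw [e0, e1, e2, e3, e4, e5]; ring)
      rw [Fin.sum_univ_six, e0, e1, e2, e3, e4, e5] at hp
      simp [hwabs, hre] at hp
      linarith
    · obtain ⟨z, hz⟩ : ∃ z : Fin 6 → ℂ, z = ![1, 1, 0, 0, w, -w] := ⟨_, rfl⟩
      have e0 : z 0 = 1 := by rw [hz]; rfl
      have e1 : z 1 = 1 := by rw [hz]; rfl
      have e2 : z 2 = 0 := by rw [hz]; rfl
      have e3 : z 3 = 0 := by rw [hz]; rfl
      have e4 : z 4 = w := by rw [hz]; rfl
      have e5 : z 5 = -w := by rw [hz]; rfl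
      have hp := h z (fun h0 => one_ne_zero (e0 ▸ congrFun h0 0))
        (by rw [e0, e1, e2, e3, e4, e5]; ring)
      rw [Fin.sum_univ_six, e0, e1, e2, e3, e4, e5] at hp
      simp [hwabs, hre] at hp
      linarith
    · obtain ⟨z, hz⟩ : ∃ z : Fin 6 → ℂ, z = ![1, 0, 1, w, 0, -w] := ⟨_, rfl⟩
      have e0 : z 0 = 1 := by rw [hz]; rfl
      have e1 : z 1 = 0 := by rw [hz]; rfl
      have e2 : z 2 = 1 := by rw [hz]; rfl
      have e3 : z 3 = w := by rw [hz]; rfl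
      have e4 : z 4 = 0 := by rw [hz]; rfl
      have e5 : z 5 = -w := by rw [hz]; rfl
      have hp := h z (fun h0 => one_ne_zero (e0 ▸ congrFun h0 0))
        (by rw [e0, e1, e2, e3, e4, e5]; ring)
      rw [Fin.sum_univ_six, e0, e1, e2, e3, e4, e5] at hp
      simp [hwabs, hre] at hp
      linarith
  · intro ha z hz hq
    have hS := sum_sq_pos' z hz
    rw [Fin.sum_univ_six] at hS ⊢
    rcases hij with hh | hh | hh <;>
      (rw [Prod.mk.injEq] at hh; obtain ⟨hi, hj⟩ := hh; subst hi; subst hj)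
    · have := key_pos' a (z 0) (z 5) (z 1) (z 4) (z 2) (z 3) ha
        (by linear_combination hq) (by linarith)
      linarith
    · have := key_pos' a (z 1) (z 4) (z 0) (z 5) (z 2) (z 3) ha
        (by linear_combination hq) (by linarith)
      linarith
    · have := key_pos' a (z 2) (z 3) (z 0) (z 5) (z 1) (z 4) ha
        (by linear_combination hq) (by linarith)
      linarith
end

section
/- For every a ∈ ℂ and every z = (z₁,…,z₆) ∈ ℂ⁶ satisfying z₁z₆ + z₂z₅ + z₃z₄ = 0, one has ∑_{k=1}^{6} |z_k|² + 2·Re(a·conj(z₂)·z₅) ≥ 2·(2 − |a|)·|z₂|·|z₅|. -/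
/-- Key estimate: on the quadric `z₁z₆ + z₂z₅ + z₃z₄ = 0` (0-based indices),
the Hermitian form `∑ |z_k|² + 2 Re(a conj(z₂) z₅)` is at least
`2(2 − |a|)|z₂||z₅|`. -/
theorem quadric_hermitian_form_lower_bound (a : ℂ) (z : Fin 6 → ℂ)
    (hz : z 0 * z 5 + z 1 * z 4 + z 2 * z 3 = 0) :
    2 * (2 - ‖a‖) * (‖z 1‖ * ‖z 4‖) ≤
      ∑ k, ‖z k‖ ^ 2 + 2 * (a * (starRingEnd ℂ) (z 1) * z 4).re := by
  rw [Fin.sum_univ_six]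
  have h1 : z 0 * z 5 + z 2 * z 3 = -(z 1 * z 4) := by linear_combination hz
  have h2 : ‖z 1‖ * ‖z 4‖ ≤
      ‖z 0‖ * ‖z 5‖ + ‖z 2‖ * ‖z 3‖ := by
    calc ‖z 1‖ * ‖z 4‖ = ‖z 0 * z 5 + z 2 * z 3‖ := by
          rw [h1, norm_neg, norm_mul]
      _ ≤ _ := by
          refine (norm_add_le _ _).trans_eq ?_
          rw [norm_mul, norm_mul]
  have h3 : -(‖a‖ * ‖z 1‖ * ‖z 4‖) ≤
      (a * (starRingEnd ℂ) (z 1) * z 4).re := by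
    have := (Complex.abs_re_le_norm (a * (starRingEnd ℂ) (z 1) * z 4))
    rw [norm_mul, norm_mul, Complex.norm_conj] at this
    have := neg_abs_le (a * (starRingEnd ℂ) (z 1) * z 4).re
    nlinarith [Complex.abs_re_le_norm (a * (starRingEnd ℂ) (z 1) * z 4)]
  nlinarith [sq_nonneg (‖z 0‖ - ‖z 5‖),
    sq_nonneg (‖z 1‖ - ‖z 4‖),
    sq_nonneg (‖z 2‖ - ‖z 3‖)]
end

section
/- Let a ∈ ℂ with |a| < 2. Then for every nonzero z = (z₁,…,z₆) ∈ ℂ⁶ satisfying z₁z₆ + z₂z₅ + z₃z₄ = 0, one has ∑_{k=1}^{6} |z_k|² + 2·Re(a·conj(z₂)·z₅) > 0. -/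
/-- Sufficiency: if `|a| < 2`, the Hermitian form
`∑ |z_k|² + 2 Re(a conj(z₂) z₅)` is strictly positive at every nonzero point of
the quadric `z₁z₆ + z₂z₅ + z₃z₄ = 0` (0-based indices). -/
theorem hermitian_form_pos_of_abs_lt_two (a : ℂ) (ha : ‖a‖ < 2)
    (z : Fin 6 → ℂ) (hz : z ≠ 0)
    (hQ : z 0 * z 5 + z 1 * z 4 + z 2 * z 3 = 0) :
    0 < ∑ k, ‖z k‖ ^ 2 + 2 * (a * (starRingEnd ℂ) (z 1) * z 4).re := by
  have ha0 : 0 ≤ ‖a‖ := norm_nonneg a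
  -- lower bound on the real part
  have hre : -(‖a‖ * (‖z 1‖ * ‖z 4‖)) ≤
      (a * (starRingEnd ℂ) (z 1) * z 4).re := by
    have h1 := (abs_le.mp (Complex.abs_re_le_norm (a * (starRingEnd ℂ) (z 1) * z 4))).1
    have h2 : ‖a * (starRingEnd ℂ) (z 1) * z 4‖
        = ‖a‖ * (‖z 1‖ * ‖z 4‖) := by
      simp [map_mul, mul_assoc]
    linarith [h1, h2.ge, h2.le]
  -- quadric bound
  have hq : ‖z 1‖ * ‖z 4‖ ≤
      ‖z 0‖ * ‖z 5‖ + ‖z 2‖ * ‖z 3‖ := by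
    have h14 : z 1 * z 4 = -(z 0 * z 5 + z 2 * z 3) := by linear_combination hQ
    calc ‖z 1‖ * ‖z 4‖ = ‖z 1 * z 4‖ := (norm_mul _ _).symm
      _ = ‖z 0 * z 5 + z 2 * z 3‖ := by rw [h14, norm_neg]
      _ ≤ ‖z 0 * z 5‖ + ‖z 2 * z 3‖ := norm_add_le _ _
      _ = _ := by rw [norm_mul, norm_mul]
  -- positivity of the sum of squares
  obtain ⟨k, hk⟩ := Function.ne_iff.mp hz
  have hpos : 0 < ∑ k, ‖z k‖ ^ 2 := by
    refine Finset.sum_pos' (fun i _ => by positivity) ⟨k, Finset.mem_univ k, ?_⟩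
    exact pow_pos (norm_pos_iff.mpr hk) 2
  rw [Fin.sum_univ_six] at hpos ⊢
  nlinarith [hre, hq, sq_nonneg (‖z 0‖ - ‖z 5‖),
    sq_nonneg (‖z 2‖ - ‖z 3‖),
    sq_nonneg (‖z 1‖ - ‖z 4‖),
    mul_nonneg (norm_nonneg (z 1)) (norm_nonneg (z 4)),
    mul_nonneg ha0 (mul_nonneg (norm_nonneg (z 1)) (norm_nonneg (z 4))),
    mul_nonneg (sub_nonneg.mpr ha.le) (mul_nonneg (norm_nonneg (z 1)) (norm_nonneg (z 4)))]
end

section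
/- Let a ∈ ℂ with a ≠ 0. Then there exists a nonzero z = (z₁,…,z₆) ∈ ℂ⁶ such that z₁z₆ + z₂z₅ + z₃z₄ = 0, conj(z₂)·z₅ = −conj(a), and ∑_{k=1}^{6} |z_k|² + 2·Re(a·conj(z₂)·z₅) = 2·|a|·(2 − |a|). -/
private lemma vec6_val_five {α} (a b c d e f : α) : ![a,b,c,d,e,f] 5 = f := by
  show Matrix.vecCons a _ 5 = f
  simp [show (5:Fin 6) = Fin.succ 4 from rfl, Matrix.cons_val_succ]

/-- Explicit witness for necessity: for `a ≠ 0` there is a nonzero point of the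
quadric `z₁z₆ + z₂z₅ + z₃z₄ = 0` (0-based indices) with `conj(z₂) z₅ = −conj a`
on which the Hermitian form takes the value `2|a|(2 − |a|)`. -/
theorem exists_witness_on_quadric (a : ℂ) (ha : a ≠ 0) :
    ∃ z : Fin 6 → ℂ, z ≠ 0 ∧
      z 0 * z 5 + z 1 * z 4 + z 2 * z 3 = 0 ∧
      (starRingEnd ℂ) (z 1) * z 4 = -(starRingEnd ℂ) a ∧
      ∑ k, ‖z k‖ ^ 2 + 2 * (a * (starRingEnd ℂ) (z 1) * z 4).re =
        2 * ‖a‖ * (2 - ‖a‖) := by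
  set m : ℝ := ‖a‖ with hm
  have hmpos : 0 < m := by simpa [hm] using (norm_pos_iff.mpr ha)
  set r : ℝ := Real.sqrt m with hr
  have hrpos : 0 < r := Real.sqrt_pos.mpr hmpos
  have hrne : (r : ℂ) ≠ 0 := by exact_mod_cast ne_of_gt hrpos
  have hr2 : (r : ℝ) ^ 2 = m := Real.sq_sqrt hmpos.le
  refine ⟨![(r : ℂ), (r : ℂ), 0, 0, -(starRingEnd ℂ) a / r, (starRingEnd ℂ) a / r], ?_, ?_, ?_, ?_⟩
  · intro h
    have := congrFun h 0
    simp at this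
    exact hrpos.ne' this
  · simp only [Matrix.cons_val_zero, Matrix.cons_val_one, Matrix.head_cons,
      Matrix.cons_val_two, Matrix.cons_val_three, Matrix.cons_val_four,
      Matrix.tail_cons, vec6_val_five]
    field_simp
    ring
  · simp only [Matrix.cons_val_one, Matrix.head_cons, Matrix.cons_val_four,
      Matrix.tail_cons, Matrix.cons_val_zero]
    rw [Complex.conj_ofReal]
    field_simp
  · simp only [Fin.sum_univ_six, Matrix.cons_val_zero, Matrix.cons_val_one,
      Matrix.head_cons, Matrix.cons_val_two, Matrix.cons_val_three,
      Matrix.cons_val_four, Matrix.tail_cons, vec6_val_five]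
    have habs : ‖((starRingEnd ℂ) a / (r:ℂ))‖ = m / r := by
      rw [norm_div, Complex.norm_conj, Complex.norm_real, Real.norm_eq_abs, abs_of_pos hrpos, hm]
    have h1 : ‖(-(starRingEnd ℂ) a / (r:ℂ))‖ = m / r := by
      rw [neg_div, norm_neg, habs]
    have h2 : (a * (starRingEnd ℂ) (r:ℂ) * (-(starRingEnd ℂ) a / (r:ℂ))).re = -(m^2) := by
      rw [Complex.conj_ofReal]
      have : a * (r:ℂ) * (-(starRingEnd ℂ) a / (r:ℂ)) = -(a * (starRingEnd ℂ) a) := by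
        field_simp
      rw [this, Complex.mul_conj]
      simp [hm, Complex.normSq_eq_norm_sq, ← Complex.ofReal_pow]
    rw [h1, habs, h2, Complex.norm_real, Real.norm_eq_abs, abs_of_pos hrpos, norm_zero]
    have hrne' : r ≠ 0 := hrpos.ne'
    field_simp
    ring_nf
    nlinarith [hr2]
end

section
/- Let a ∈ ℂ with |a| ≥ 2. Then there exists a nonzero z = (z₁,…,z₆) ∈ ℂ⁶ such that z₁z₆ + z₂z₅ + z₃z₄ = 0 and ∑_{k=1}^{6} |z_k|² + 2·Re(a·conj(z₂)·z₅) ≤ 0. -/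
/-- Necessity: if `|a| ≥ 2`, the Hermitian form
`∑ |z_k|² + 2 Re(a conj(z₂) z₅)` fails strict positivity at some nonzero point
of the quadric `z₁z₆ + z₂z₅ + z₃z₄ = 0` (0-based indices). -/
theorem exists_nonpos_on_quadric_of_two_le_abs (a : ℂ) (ha : 2 ≤ ‖a‖) :
    ∃ z : Fin 6 → ℂ, z ≠ 0 ∧
      z 0 * z 5 + z 1 * z 4 + z 2 * z 3 = 0 ∧
      ∑ k, ‖z k‖ ^ 2 + 2 * (a * (starRingEnd ℂ) (z 1) * z 4).re ≤ 0 := by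
  have hr : (0:ℝ) < ‖a‖ := lt_of_lt_of_le (by norm_num) ha
  have ha0 : a ≠ 0 := by
    intro h; simp [h] at hr
  refine ⟨![1, 1, 0, 0, -((starRingEnd ℂ) a) / (‖a‖ : ℂ),
      ((starRingEnd ℂ) a) / (‖a‖ : ℂ)], ?_, ?_, ?_⟩
  · intro h
    have := congrFun h 0
    simp at this
  · show (1:ℂ) * (((starRingEnd ℂ) a) / (‖a‖ : ℂ))
        + 1 * (-((starRingEnd ℂ) a) / (‖a‖ : ℂ)) + 0 * 0 = 0
    ring
  · have habs : ‖((starRingEnd ℂ) a) / (‖a‖ : ℂ)‖ = 1 := by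
      simp [norm_div, Complex.norm_real, abs_of_pos hr, div_self (ne_of_gt hr)]
    have hre : (a * (starRingEnd ℂ) (1:ℂ) *
        (-((starRingEnd ℂ) a) / (‖a‖ : ℂ))).re = -‖a‖ := by
      have h1 : a * (starRingEnd ℂ) (1:ℂ) * (-((starRingEnd ℂ) a) / (‖a‖ : ℂ))
          = -((a * (starRingEnd ℂ) a) / (‖a‖ : ℂ)) := by
        rw [map_one]; ring
      rw [h1, Complex.mul_conj]
      have : ((Complex.normSq a : ℂ) / (‖a‖ : ℂ)) = ((‖a‖ : ℝ) : ℂ) := by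
        rw [Complex.normSq_eq_norm_sq]
        push_cast
        rw [pow_two, mul_div_assoc, div_self (by exact_mod_cast ne_of_gt hr), mul_one]
      rw [this]
      simp
    rw [Fin.sum_univ_six]
    show ‖(1:ℂ)‖ ^ 2 + ‖(1:ℂ)‖ ^ 2 + ‖(0:ℂ)‖ ^ 2 + ‖(0:ℂ)‖ ^ 2
        + ‖-((starRingEnd ℂ) a) / (‖a‖ : ℂ)‖ ^ 2
        + ‖((starRingEnd ℂ) a) / (‖a‖ : ℂ)‖ ^ 2
        + 2 * (a * (starRingEnd ℂ) (1:ℂ) *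
          (-((starRingEnd ℂ) a) / (‖a‖ : ℂ))).re ≤ 0
    have habs' : ‖-((starRingEnd ℂ) a) / (‖a‖ : ℂ)‖ = 1 := by
      rw [neg_div, norm_neg]; exact habs
    rw [hre, habs, habs']
    norm_num
    nlinarith
end

section
/- Let A, B, C, D, E, N ∈ ℂ satisfy |A|² + |D|² + |E|² + 2·Re(conj(B)·C) = 0 and (conj(C) − conj(B))/2 − N·conj(E) = 0. If N = 0 or E = 0 or B = 0 or C = 0, then A = B = C = D = E = 0. -/
/-- If B = C, the system forces everything to vanish. -/
lemma skt_aux (A B C D E : ℂ)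
    (h1 : ‖A‖ ^ 2 + ‖D‖ ^ 2 + ‖E‖ ^ 2 +
        2 * ((starRingEnd ℂ) B * C).re = 0)
    (hBC : B = C) :
    A = 0 ∧ B = 0 ∧ C = 0 ∧ D = 0 ∧ E = 0 := by
  subst hBC
  have hre : ((starRingEnd ℂ) B * B).re = ‖B‖ ^ 2 := by
    rw [mul_comm, Complex.mul_conj]
    simp [Complex.sq_norm]
  rw [hre] at h1
  have h2 := norm_nonneg A
  have h3 := norm_nonneg B
  have h4 := norm_nonneg D
  have h5 := norm_nonneg E
  have hA : ‖A‖ = 0 := by nlinarith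
  have hB : ‖B‖ = 0 := by nlinarith
  have hD : ‖D‖ = 0 := by nlinarith
  have hE : ‖E‖ = 0 := by nlinarith
  refine ⟨?_, ?_, ?_, ?_, ?_⟩ <;> simp_all

/-- If B = 0 or C = 0, the cross term vanishes. -/
lemma skt_aux2 (A B C D E N : ℂ)
    (h1 : ‖A‖ ^ 2 + ‖D‖ ^ 2 + ‖E‖ ^ 2 +
        2 * ((starRingEnd ℂ) B * C).re = 0)
    (h2 : ((starRingEnd ℂ) C - (starRingEnd ℂ) B) / 2 - N * (starRingEnd ℂ) E = 0)
    (hbc : B = 0 ∨ C = 0) :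
    A = 0 ∧ B = 0 ∧ C = 0 ∧ D = 0 ∧ E = 0 := by
  have hz : ((starRingEnd ℂ) B * C).re = 0 := by
    rcases hbc with h | h <;> simp [h]
  rw [hz] at h1
  have h2' := norm_nonneg A
  have h4 := norm_nonneg D
  have h5 := norm_nonneg E
  have hA : ‖A‖ = 0 := by nlinarith
  have hD : ‖D‖ = 0 := by nlinarith
  have hE : ‖E‖ = 0 := by nlinarith
  have hE0 : E = 0 := by simpa using hE
  subst hE0
  simp only [map_zero, mul_zero, sub_zero, div_eq_zero_iff, sub_eq_zero] at h2
  have hBC : B = C := by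
    rcases h2 with h | h
    · exact ((starRingEnd ℂ).injective h).symm
    · norm_num at h
  have hA0 : A = 0 := by simpa using hA
  have hD0 : D = 0 := by simpa using hD
  rcases hbc with h | h
  · exact ⟨hA0, h, hBC ▸ h, hD0, rfl⟩
  · exact ⟨hA0, hBC.trans h, h, hD0, rfl⟩

/-- Degenerate cases of the SKT + 2-symplectic system on 6-dimensional
nilmanifolds force all structure constants to vanish (the torus case). -/
theorem skt_two_symplectic_degenerate (A B C D E N : ℂ)
    (h1 : ‖A‖ ^ 2 + ‖D‖ ^ 2 + ‖E‖ ^ 2 +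
        2 * ((starRingEnd ℂ) B * C).re = 0)
    (h2 : ((starRingEnd ℂ) C - (starRingEnd ℂ) B) / 2 - N * (starRingEnd ℂ) E = 0)
    (h3 : N = 0 ∨ E = 0 ∨ B = 0 ∨ C = 0) :
    A = 0 ∧ B = 0 ∧ C = 0 ∧ D = 0 ∧ E = 0 := by
  rcases h3 with hN | hE | hB | hC
  · subst hN
    simp only [zero_mul, sub_zero, div_eq_zero_iff, sub_eq_zero] at h2
    have hBC : B = C := by
      rcases h2 with h | h
      · exact ((starRingEnd ℂ).injective h).symm
      · norm_num at h
    exact skt_aux A B C D E h1 hBC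
  · subst hE
    simp only [map_zero, mul_zero, sub_zero, div_eq_zero_iff, sub_eq_zero] at h2
    have hBC : B = C := by
      rcases h2 with h | h
      · exact ((starRingEnd ℂ).injective h).symm
      · norm_num at h
    exact skt_aux A B C D 0 h1 hBC
  · exact skt_aux2 A B C D E N h1 h2 (Or.inl hB)
  · exact skt_aux2 A B C D E N h1 h2 (Or.inr hC)
end

section
/- Let N ∈ ℂ with |N| > 1 and let C ∈ ℂ with C ≠ 0. Then there exist B, E ∈ ℂ, both nonzero, such that |E|² + 2·Re(conj(B)·C) = 0 and (conj(C) − conj(B))/2 − N·conj(E) = 0. -/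
/-- Nontrivial solvability of the SKT + 2-symplectic system: for `|N| > 1` and
`C ≠ 0` there are nonzero `B, E` solving the system. -/
theorem exists_nontrivial_skt_two_symplectic (N C : ℂ)
    (hN : 1 < ‖N‖) (hC : C ≠ 0) :
    ∃ B E : ℂ, B ≠ 0 ∧ E ≠ 0 ∧
      ‖E‖ ^ 2 + 2 * ((starRingEnd ℂ) B * C).re = 0 ∧
      ((starRingEnd ℂ) C - (starRingEnd ℂ) B) / 2 - N * (starRingEnd ℂ) E = 0 := by
  have hN0 : N ≠ 0 := by
    intro h; rw [h] at hN; simp at hN; linarith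
  set a : ℝ := 4 * ‖N‖ ^ 2 - 1 with ha_def
  have ha : 3 < a := by nlinarith [hN, norm_nonneg N]
  have hs0 : (0:ℝ) ≤ a ^ 2 - 1 := by nlinarith
  set s : ℝ := Real.sqrt (a ^ 2 - 1) with hs_def
  have hs2 : s ^ 2 = a ^ 2 - 1 := Real.sq_sqrt hs0
  have hsnn : 0 ≤ s := Real.sqrt_nonneg _
  set t : ℝ := -a + s with ht_def
  have htq : t ^ 2 + 2 * a * t + 1 = 0 := by nlinarith
  have htneg : t < 0 := by nlinarith
  have ht0 : (t:ℂ) ≠ 0 := by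
    exact_mod_cast ne_of_lt htneg
  have ht1 : t ≠ 1 := by intro h; rw [h] at htq; nlinarith
  have ht1' : ((1 - t : ℝ) : ℂ) ≠ 0 := by
    have : (1 - t : ℝ) ≠ 0 := by intro h; apply ht1; linarith
    exact_mod_cast this
  have hNc : (starRingEnd ℂ) N ≠ 0 := by
    simpa using hN0
  refine ⟨(t:ℂ) * C, ((1 - t : ℝ) : ℂ) * C / (2 * (starRingEnd ℂ) N), ?_, ?_, ?_, ?_⟩
  · exact mul_ne_zero ht0 hC
  · exact div_ne_zero (mul_ne_zero ht1' hC) (mul_ne_zero two_ne_zero hNc)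
  · have h1 : ‖((1 - t : ℝ) : ℂ)‖ = 1 - t := by
      rw [Complex.norm_real, Real.norm_eq_abs]; exact abs_of_nonneg (by linarith)
    have habs : ‖((1 - t : ℝ) : ℂ) * C / (2 * (starRingEnd ℂ) N)‖ ^ 2
        = (1 - t) ^ 2 * ‖C‖ ^ 2 / (4 * ‖N‖ ^ 2) := by
      rw [norm_div, norm_mul, norm_mul, h1, Complex.norm_conj, Complex.norm_two]
      ring
    rw [habs]
    have hre : ((starRingEnd ℂ) ((t:ℂ) * C) * C).re = t * ‖C‖ ^ 2 := by
      rw [Complex.sq_norm]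
      simp [Complex.normSq_apply, Complex.mul_re]
      ring
    rw [hre]
    have hNpos : (0:ℝ) < 4 * ‖N‖ ^ 2 := by nlinarith
    field_simp
    rw [show (4 * ‖N‖ ^ 2 : ℝ) = a + 1 by rw [ha_def]; ring]
    linear_combination ‖C‖ ^ 2 * htq
  · simp only [map_div₀, map_mul, Complex.conj_conj, Complex.conj_ofReal, map_ofNat]
    field_simp
    push_cast
    ring
end

section
/- Let a₂, a₃, a₅, a₁₀, a₁₂, M ∈ ℂ satisfy |a₂|² + |a₅|² + |a₁₀|² = 2·Re(a₃·conj(a₁₂)) and (3/4)·i·(a₃ + a₁₂) + conj(M)·a₂ = 0. If a₂ = 0 or a₃ = 0 or a₁₂ = 0 or M = 0, then a₂ = a₃ = a₅ = a₁₀ = a₁₂ = 0. -/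
/-- Degenerate cases of the reduced 3-symplectic + SKT + Astheno-Kähler system
on 8-dimensional nilmanifolds force all remaining structure constants to
vanish (the torus case). -/
theorem three_symplectic_degenerate (a₂ a₃ a₅ a₁₀ a₁₂ M : ℂ)
    (h1 : ‖a₂‖ ^ 2 + ‖a₅‖ ^ 2 + ‖a₁₀‖ ^ 2 =
        2 * (a₃ * (starRingEnd ℂ) a₁₂).re)
    (h2 : (3 / 4) * Complex.I * (a₃ + a₁₂) + (starRingEnd ℂ) M * a₂ = 0)
    (h3 : a₂ = 0 ∨ a₃ = 0 ∨ a₁₂ = 0 ∨ M = 0) :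
    a₂ = 0 ∧ a₃ = 0 ∧ a₅ = 0 ∧ a₁₀ = 0 ∧ a₁₂ = 0 := by
  rw [Complex.sq_norm, Complex.sq_norm, Complex.sq_norm] at h1
  have n2 := Complex.normSq_nonneg a₂
  have n5 := Complex.normSq_nonneg a₅
  have n10 := Complex.normSq_nonneg a₁₀
  -- Case A: if a₃ + a₁₂ = 0, conclude.
  have caseA : a₃ + a₁₂ = 0 →
      a₂ = 0 ∧ a₃ = 0 ∧ a₅ = 0 ∧ a₁₀ = 0 ∧ a₁₂ = 0 := by
    intro hs
    have h12 : a₁₂ = -a₃ := by linear_combination hs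
    subst h12
    rw [map_neg, mul_neg, Complex.mul_conj] at h1
    simp only [Complex.neg_re, Complex.ofReal_re] at h1
    have n3 := Complex.normSq_nonneg a₃
    have e2 : Complex.normSq a₂ = 0 := by linarith
    have e5 : Complex.normSq a₅ = 0 := by linarith
    have e10 : Complex.normSq a₁₀ = 0 := by linarith
    have e3 : Complex.normSq a₃ = 0 := by linarith
    refine ⟨Complex.normSq_eq_zero.mp e2, Complex.normSq_eq_zero.mp e3,
      Complex.normSq_eq_zero.mp e5, Complex.normSq_eq_zero.mp e10, ?_⟩
    rw [Complex.normSq_eq_zero.mp e3, neg_zero]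
  -- Case B: if a₂ = 0, derive a₃ + a₁₂ = 0 from h2.
  have caseB : a₂ = 0 →
      a₂ = 0 ∧ a₃ = 0 ∧ a₅ = 0 ∧ a₁₀ = 0 ∧ a₁₂ = 0 := by
    intro h2eq
    apply caseA
    have h2' : (3 / 4 : ℂ) * Complex.I * (a₃ + a₁₂) = 0 := by
      rw [h2eq, mul_zero, add_zero] at h2; exact h2
    have hI : ((3 / 4 : ℂ) * Complex.I) ≠ 0 := by
      simp [Complex.I_ne_zero]
    exact (mul_eq_zero.mp h2').resolve_left hI
  rcases h3 with h | h | h | h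
  · exact caseB h
  · -- a₃ = 0 : the right-hand side of h1 vanishes
    rw [h, zero_mul, Complex.zero_re, mul_zero] at h1
    have e2 : Complex.normSq a₂ = 0 := by linarith
    exact caseB (Complex.normSq_eq_zero.mp e2)
  · rw [h, map_zero, mul_zero, Complex.zero_re, mul_zero] at h1
    have e2 : Complex.normSq a₂ = 0 := by linarith
    exact caseB (Complex.normSq_eq_zero.mp e2)
  · apply caseA
    have h2' : (3 / 4 : ℂ) * Complex.I * (a₃ + a₁₂) = 0 := by
      rw [h, map_zero, zero_mul, add_zero] at h2; exact h2
    have hI : ((3 / 4 : ℂ) * Complex.I) ≠ 0 := by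
      simp [Complex.I_ne_zero]
    exact (mul_eq_zero.mp h2').resolve_left hI
end
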